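/- The curve α : ℝ → ℝ³ given by α₁(s) = −2√(2/3) cos(√3 s) sin(√2 s) + 2 cos(√2 s) sin(√3 s), α₂(s) = −(2/3)(3 cos(√2 s) cos(√3 s) + √6 sin(√2 s) sin(√3 s)), α₃(s) = (2/√3) sin(√2 s) satisfies α'(s) = 2 cos(√2 s) γ(s) where γ(s) = ((1/√3) cos(√3 s), (1/√3) sin(√3 s), √(2/3)); consequently ‖α(s)‖ = 2 on any interval where cos(√2 s) ≠ 0, i.e. α lies on the sphere of radius 2 centered at the origin. -/

import Mathlib

noncomputable section

/-- ℝ³ as a Euclidean space. -/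
abbrev E3 : Type := EuclideanSpace ℝ (Fin 3)

/-- The cross product on ℝ³. -/
def cross3 (u v : E3) : E3 :=
  (WithLp.equiv 2 (Fin 3 → ℝ)).symm
    (crossProduct ((WithLp.equiv 2 (Fin 3 → ℝ)) u) ((WithLp.equiv 2 (Fin 3 → ℝ)) v))

/-- The (real) inner product on ℝ³. -/
def inner3 (u v : E3) : ℝ := inner ℝ u v

/-- The speed ν of a curve. -/
def speed (c : ℝ → E3) (s : ℝ) : ℝ := ‖deriv c s‖

/-- The curvature κ of a curve. -/
def curvature (c : ℝ → E3) (s : ℝ) : ℝ :=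
  ‖cross3 (deriv c s) (deriv (deriv c) s)‖ / ‖deriv c s‖ ^ 3

/-- The torsion τ of a curve. -/
def torsion (c : ℝ → E3) (s : ℝ) : ℝ :=
  inner3 (cross3 (deriv c s) (deriv (deriv c) s)) (deriv (deriv (deriv c)) s) /
    ‖cross3 (deriv c s) (deriv (deriv c) s)‖ ^ 2

/-- σ(s) = (κ²/(ν (κ² + τ²)^{3/2}))·(τ/κ)'(s), the geodesic curvature of the spherical
image of the principal normal indicatrix. -/
def sigmaOf (c : ℝ → E3) (s : ℝ) : ℝ :=
  (curvature c s) ^ 2 / (speed c s * ((curvature c s) ^ 2 + (torsion c s) ^ 2) ^ ((3 : ℝ) / 2)) *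
    deriv (fun t => torsion c t / curvature c t) s

/-- The geodesic curvature k_g(s) = det(γ(s), γ'(s), γ''(s)) = ⟨γ(s) × γ'(s), γ''(s)⟩ of a
unit speed spherical curve γ. -/
def kgOf (γ : ℝ → E3) (s : ℝ) : ℝ :=
  inner3 (cross3 (γ s) (deriv γ s)) (deriv (deriv γ) s)

/-- Build a vector in ℝ³ from coordinates. -/
def mk3 (x y z : ℝ) : E3 := (WithLp.equiv 2 (Fin 3 → ℝ)).symm ![x, y, z]

end

noncomputable section AuxHelix

theorem smul_mk3' (c x y z : ℝ) : c • mk3 x y z = mk3 (c * x) (c * y) (c * z) := by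
  apply (WithLp.equiv 2 (Fin 3 → ℝ)).injective
  funext i
  fin_cases i <;> simp [mk3]

theorem hasDerivAt_mk3 {f g h : ℝ → ℝ} {f' g' h' s : ℝ}
    (hf : HasDerivAt f f' s) (hg : HasDerivAt g g' s) (hh : HasDerivAt h h' s) :
    HasDerivAt (fun u => mk3 (f u) (g u) (h u)) (mk3 f' g' h') s := by
  have hp : HasDerivAt (fun u => (![f u, g u, h u] : Fin 3 → ℝ)) ![f', g', h'] s := by
    rw [hasDerivAt_pi]
    intro i
    fin_cases i <;> simpa
  have := ((EuclideanSpace.equiv (Fin 3) ℝ).symm :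
      (Fin 3 → ℝ) →L[ℝ] E3).hasFDerivAt.comp_hasDerivAt s hp
  exact this

theorem norm_mk3 (x y z : ℝ) : ‖mk3 x y z‖ = Real.sqrt (x ^ 2 + y ^ 2 + z ^ 2) := by
  simp [mk3, EuclideanSpace.norm_eq, Fin.sum_univ_three, sq_abs]

end AuxHelix

/-- The explicit curve α satisfies α'(s) = 2 cos(√2 s) γ(s), where γ is the
circle γ(s) = ((1/√3) cos(√3 s), (1/√3) sin(√3 s), √(2/3)) on the unit sphere; consequently
‖α(s)‖ = 2 wherever cos(√2 s) ≠ 0, i.e. α lies on the sphere of radius 2 centered at 0. -/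


theorem example_spherical_helix :
    ∀ s : ℝ,
      HasDerivAt
        (fun u : ℝ => mk3
          (-2 * Real.sqrt (2 / 3) * Real.cos (Real.sqrt 3 * u) * Real.sin (Real.sqrt 2 * u) +
            2 * Real.cos (Real.sqrt 2 * u) * Real.sin (Real.sqrt 3 * u))
          (-(2 / 3) * (3 * Real.cos (Real.sqrt 2 * u) * Real.cos (Real.sqrt 3 * u) +
            Real.sqrt 6 * Real.sin (Real.sqrt 2 * u) * Real.sin (Real.sqrt 3 * u)))
          ((2 / Real.sqrt 3) * Real.sin (Real.sqrt 2 * u)))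
        ((2 * Real.cos (Real.sqrt 2 * s)) •
          mk3 ((1 / Real.sqrt 3) * Real.cos (Real.sqrt 3 * s))
            ((1 / Real.sqrt 3) * Real.sin (Real.sqrt 3 * s))
            (Real.sqrt (2 / 3))) s ∧
      (Real.cos (Real.sqrt 2 * s) ≠ 0 →
        ‖mk3
          (-2 * Real.sqrt (2 / 3) * Real.cos (Real.sqrt 3 * s) * Real.sin (Real.sqrt 2 * s) +
            2 * Real.cos (Real.sqrt 2 * s) * Real.sin (Real.sqrt 3 * s))
          (-(2 / 3) * (3 * Real.cos (Real.sqrt 2 * s) * Real.cos (Real.sqrt 3 * s) +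
            Real.sqrt 6 * Real.sin (Real.sqrt 2 * s) * Real.sin (Real.sqrt 3 * s)))
          ((2 / Real.sqrt 3) * Real.sin (Real.sqrt 2 * s))‖ = 2) := by

  intro s
  have ha : Real.sqrt 2 ^ 2 = 2 := Real.sq_sqrt (by norm_num)
  have hb : Real.sqrt 3 ^ 2 = 3 := Real.sq_sqrt (by norm_num)
  have hb0 : Real.sqrt 3 ≠ 0 := by positivity
  have h23 : Real.sqrt (2 / 3) = Real.sqrt 2 / Real.sqrt 3 :=
    Real.sqrt_div (by norm_num : (0:ℝ) ≤ 2) 3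
  have h6 : Real.sqrt 6 = Real.sqrt 2 * Real.sqrt 3 := by
    rw [show (6:ℝ) = 2 * 3 by norm_num, Real.sqrt_mul (by norm_num : (0:ℝ) ≤ 2)]
  have hc3 : HasDerivAt (fun u : ℝ => Real.cos (Real.sqrt 3 * u))
      (-Real.sin (Real.sqrt 3 * s) * Real.sqrt 3) s :=
    (Real.hasDerivAt_cos _).comp s (by simpa using (hasDerivAt_id s).const_mul (Real.sqrt 3))
  have hs3 : HasDerivAt (fun u : ℝ => Real.sin (Real.sqrt 3 * u))
      (Real.cos (Real.sqrt 3 * s) * Real.sqrt 3) s :=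
    (Real.hasDerivAt_sin _).comp s (by simpa using (hasDerivAt_id s).const_mul (Real.sqrt 3))
  have hc2 : HasDerivAt (fun u : ℝ => Real.cos (Real.sqrt 2 * u))
      (-Real.sin (Real.sqrt 2 * s) * Real.sqrt 2) s :=
    (Real.hasDerivAt_cos _).comp s (by simpa using (hasDerivAt_id s).const_mul (Real.sqrt 2))
  have hs2 : HasDerivAt (fun u : ℝ => Real.sin (Real.sqrt 2 * u))
      (Real.cos (Real.sqrt 2 * s) * Real.sqrt 2) s :=
    (Real.hasDerivAt_sin _).comp s (by simpa using (hasDerivAt_id s).const_mul (Real.sqrt 2))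
  constructor
  · -- derivative
    have h1 : HasDerivAt (fun u : ℝ =>
        -2 * Real.sqrt (2/3) * Real.cos (Real.sqrt 3 * u) * Real.sin (Real.sqrt 2 * u) +
        2 * Real.cos (Real.sqrt 2 * u) * Real.sin (Real.sqrt 3 * u))
        (2 * Real.cos (Real.sqrt 2 * s) * ((1 / Real.sqrt 3) * Real.cos (Real.sqrt 3 * s))) s := by
      have H := ((hc3.mul hs2).const_mul (-2 * Real.sqrt (2/3))).add
        ((hc2.mul hs3).const_mul 2)
      have heq : (fun u : ℝ =>
          -2 * Real.sqrt (2/3) * Real.cos (Real.sqrt 3 * u) * Real.sin (Real.sqrt 2 * u) +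
          2 * Real.cos (Real.sqrt 2 * u) * Real.sin (Real.sqrt 3 * u)) =
          (fun u : ℝ => -2 * Real.sqrt (2/3) *
              (Real.cos (Real.sqrt 3 * u) * Real.sin (Real.sqrt 2 * u)) +
            2 * (Real.cos (Real.sqrt 2 * u) * Real.sin (Real.sqrt 3 * u))) := by
        funext u; ring
      rw [heq]
      refine H.congr_deriv ?_
      rw [h23]
      field_simp
      ring_nf
      rw [ha, hb]
      ring
    have h2 : HasDerivAt (fun u : ℝ =>
        -(2/3) * (3 * Real.cos (Real.sqrt 2 * u) * Real.cos (Real.sqrt 3 * u) +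
          Real.sqrt 6 * Real.sin (Real.sqrt 2 * u) * Real.sin (Real.sqrt 3 * u)))
        (2 * Real.cos (Real.sqrt 2 * s) * ((1 / Real.sqrt 3) * Real.sin (Real.sqrt 3 * s))) s := by
      have H := (((hc2.mul hc3).const_mul 3).add
        ((hs2.mul hs3).const_mul (Real.sqrt 6))).const_mul (-(2/3))
      have heq : (fun u : ℝ =>
          -(2/3) * (3 * Real.cos (Real.sqrt 2 * u) * Real.cos (Real.sqrt 3 * u) +
            Real.sqrt 6 * Real.sin (Real.sqrt 2 * u) * Real.sin (Real.sqrt 3 * u))) =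
          (fun u : ℝ => -(2/3) *
            (3 * (Real.cos (Real.sqrt 2 * u) * Real.cos (Real.sqrt 3 * u)) +
             Real.sqrt 6 * (Real.sin (Real.sqrt 2 * u) * Real.sin (Real.sqrt 3 * u)))) := by
        funext u; ring
      rw [heq]
      refine H.congr_deriv ?_
      rw [h6]
      field_simp
      ring_nf
      rw [show Real.sqrt 3 ^ 3 = 3 * Real.sqrt 3 by rw [pow_succ, hb]]
      rw [ha, hb]
      ring
    have h3 : HasDerivAt (fun u : ℝ => (2 / Real.sqrt 3) * Real.sin (Real.sqrt 2 * u))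
        (2 * Real.cos (Real.sqrt 2 * s) * Real.sqrt (2/3)) s := by
      have H := hs2.const_mul (2 / Real.sqrt 3)
      refine H.congr_deriv ?_
      rw [h23]
      field_simp
    have hv := hasDerivAt_mk3 h1 h2 h3
    rw [smul_mk3']
    exact hv
  · -- norm
    intro _
    rw [norm_mk3]
    have hpyth2 : Real.sin (Real.sqrt 2 * s) ^ 2 + Real.cos (Real.sqrt 2 * s) ^ 2 = 1 :=
      Real.sin_sq_add_cos_sq _
    have hpyth3 : Real.sin (Real.sqrt 3 * s) ^ 2 + Real.cos (Real.sqrt 3 * s) ^ 2 = 1 :=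
      Real.sin_sq_add_cos_sq _
    have hinner : (-2 * Real.sqrt (2/3) * Real.cos (Real.sqrt 3 * s) * Real.sin (Real.sqrt 2 * s) +
          2 * Real.cos (Real.sqrt 2 * s) * Real.sin (Real.sqrt 3 * s)) ^ 2 +
        (-(2/3) * (3 * Real.cos (Real.sqrt 2 * s) * Real.cos (Real.sqrt 3 * s) +
          Real.sqrt 6 * Real.sin (Real.sqrt 2 * s) * Real.sin (Real.sqrt 3 * s))) ^ 2 +
        ((2 / Real.sqrt 3) * Real.sin (Real.sqrt 2 * s)) ^ 2 = 4 := by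
      have hbinv : Real.sqrt 3 * (Real.sqrt 3)⁻¹ = 1 := mul_inv_cancel₀ hb0
      rw [h23, h6]
      linear_combination
        (4*(Real.sqrt 3)⁻¹^2*(Real.cos (Real.sqrt 3 * s)^2*Real.sin (Real.sqrt 2 * s)^2) + 4/9*Real.sqrt 3^2*(Real.sin (Real.sqrt 2 * s)^2*Real.sin (Real.sqrt 3 * s)^2)) * ha +
        (8/9*(Real.sin (Real.sqrt 2 * s)^2*Real.sin (Real.sqrt 3 * s)^2) + 8/3*Real.sqrt 2*(Real.cos (Real.sqrt 2 * s)*Real.cos (Real.sqrt 3 * s)*Real.sin (Real.sqrt 2 * s)*Real.sin (Real.sqrt 3 * s))*(Real.sqrt 3)⁻¹ - (Real.sqrt 3)⁻¹^2/3*(8*(Real.cos (Real.sqrt 3 * s)^2*Real.sin (Real.sqrt 2 * s)^2)+4*Real.sin (Real.sqrt 2 * s)^2)) * hb +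
        (-(8/3)*Real.sqrt 2*(Real.cos (Real.sqrt 2 * s)*Real.cos (Real.sqrt 3 * s)*Real.sin (Real.sqrt 2 * s)*Real.sin (Real.sqrt 3 * s))*Real.sqrt 3 + (8*(Real.cos (Real.sqrt 3 * s)^2*Real.sin (Real.sqrt 2 * s)^2)+4*Real.sin (Real.sqrt 2 * s)^2)*(Real.sqrt 3*(Real.sqrt 3)⁻¹+1)/3) * hbinv +
        (8/3*Real.sin (Real.sqrt 2 * s)^2 + 4*Real.cos (Real.sqrt 2 * s)^2) * hpyth3 + 4 * hpyth2
    rw [hinner, show (4:ℝ) = 2 ^ 2 by norm_num, Real.sqrt_sq (by norm_num : (0:ℝ) ≤ 2)]
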